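/- A finite group G satisfies Φ(G/N) = Φ(G)N/N for all normal subgroups N of G if and only if Φ((G/F(G))/M) = 1 for every normal subgroup M of G/F(G), where F(G) is the Fitting subgroup. -/

import Mathlib

open Subgroup

/-- A subgroup `H` of `G` is subnormal if there is a chain of subgroups from `H` to `G`,
each normal in the next. -/
def IsSubnormal {G : Type*} [Group G] (H : Subgroup G) : Prop :=
  ∃ (n : ℕ) (c : ℕ → Subgroup G), c 0 = H ∧ c n = ⊤ ∧
    ∀ i, c i ≤ c (i + 1) ∧ ((c i).subgroupOf (c (i + 1))).Normal

/-- A group is quasi-simple if it is perfect and its central quotient is simple. -/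
def IsQuasiSimple (Q : Type*) [Group Q] : Prop :=
  commutator Q = ⊤ ∧ IsSimpleGroup (Q ⧸ Subgroup.center Q)

/-- A component of `G` is a subnormal quasi-simple subgroup. -/
def IsComponent {G : Type*} [Group G] (Q : Subgroup G) : Prop :=
  _root_.IsSubnormal Q ∧ IsQuasiSimple Q

/-- The layer `E(G)`: the subgroup generated by all components of `G`. -/
def layer (G : Type*) [Group G] : Subgroup G :=
  Subgroup.closure {x | ∃ Q : Subgroup G, IsComponent Q ∧ x ∈ Q}

/-- The Fitting subgroup `F(G)`: the subgroup generated by all nilpotent normal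
subgroups of `G`. -/
def fitting (G : Type*) [Group G] : Subgroup G :=
  Subgroup.normalClosure {x | ∃ N : Subgroup G, N.Normal ∧ Group.IsNilpotent N ∧ x ∈ N}

/-- The generalised Fitting subgroup `F*(G) = F(G) E(G)`. -/
def genFitting (G : Type*) [Group G] : Subgroup G := fitting G ⊔ layer G

/-- `N` is a minimal normal subgroup of `G`. -/
def IsMinimalNormal {G : Type*} [Group G] (N : Subgroup G) : Prop :=
  N.Normal ∧ N ≠ ⊥ ∧ ∀ M : Subgroup G, M.Normal → M ≤ N → M ≠ ⊥ → M = N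

/-- The socle of `G`: the subgroup generated by all minimal normal subgroups of `G`. -/
def socle (G : Type*) [Group G] : Subgroup G :=
  Subgroup.closure {x | ∃ N : Subgroup G, IsMinimalNormal N ∧ x ∈ N}

/-- `Soc(Z(G))`, viewed as a subgroup of `G`. -/
def centerSocle (G : Type*) [Group G] : Subgroup G :=
  (socle (Subgroup.center G)).map (Subgroup.center G).subtype

/-- The class `B` of groups all of whose quotients have trivial Frattini subgroup. -/
def classB (G : Type*) [Group G] : Prop :=
  ∀ (N : Subgroup G) [N.Normal], frattini (G ⧸ N) = ⊥

instance fitting_normal (G : Type*) [Group G] : (fitting G).Normal :=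
  Subgroup.normalClosure_normal

namespace Aux
open scoped Pointwise
open scoped commutatorElement

variable {G : Type*} [Group G]

lemma le_frattini {K : Subgroup G} (h : ∀ M : Subgroup G, IsCoatom M → K ≤ M) :
    K ≤ frattini G := by
  rw [frattini, Order.radical]
  exact le_iInf₂ fun M hM => h M hM

lemma frattini_map_mulEquiv {H : Type*} [Group H] (e : G ≃* H) :
    (frattini G).map e.toMonoidHom = frattini H :=
  e.mapSubgroup.map_radical

lemma frattini_eq_bot_of_mulEquiv {H : Type*} [Group H] (e : G ≃* H)
    (h : frattini G = ⊥) : frattini H = ⊥ := by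
  rw [← frattini_map_mulEquiv e, h, Subgroup.map_bot]

lemma isCoatom_map_of_surjective {H : Type*} [Group H] {f : G →* H}
    (hf : Function.Surjective f) {M : Subgroup G} (hM : IsCoatom M) (hker : f.ker ≤ M) :
    IsCoatom (M.map f) := by
  constructor
  · intro htop
    apply hM.1
    have h2 := congrArg (Subgroup.comap f) htop
    rwa [Subgroup.comap_map_eq, sup_of_le_left hker,
      (Subgroup.comap_top f : Subgroup.comap f ⊤ = ⊤)] at h2
  · intro K hK
    have h1 : M ≤ K.comap f := by
      refine le_trans ?_ (Subgroup.comap_mono hK.le)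
      rw [Subgroup.comap_map_eq]
      exact le_sup_left
    have hne : M ≠ K.comap f := by
      intro h
      apply hK.ne
      rw [h, Subgroup.map_comap_eq_self_of_surjective hf]
    have := hM.2 _ (lt_of_le_of_ne h1 hne)
    rw [← Subgroup.map_comap_eq_self_of_surjective hf K, this,
      ← Subgroup.map_top_of_surjective f hf]

lemma frattini_quotient_of_le_frattini (K : Subgroup G) [K.Normal] (hK : K ≤ frattini G) :
    frattini (G ⧸ K) = (frattini G).map (QuotientGroup.mk' K) := by
  apply le_antisymm
  · have hcomap : (frattini (G ⧸ K)).comap (QuotientGroup.mk' K) ≤ frattini G := by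
      apply le_frattini
      intro M hM
      have hKM : K ≤ M := le_trans hK (frattini_le_coatom hM)
      have hco : IsCoatom (M.map (QuotientGroup.mk' K)) :=
        isCoatom_map_of_surjective (QuotientGroup.mk'_surjective K) hM
          (by rwa [QuotientGroup.ker_mk'])
      calc (frattini (G ⧸ K)).comap (QuotientGroup.mk' K)
          ≤ (M.map (QuotientGroup.mk' K)).comap (QuotientGroup.mk' K) :=
            Subgroup.comap_mono (frattini_le_coatom hco)
        _ = M ⊔ K := by rw [Subgroup.comap_map_eq, QuotientGroup.ker_mk']
        _ = M := sup_of_le_left hKM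
    calc frattini (G ⧸ K)
        = ((frattini (G ⧸ K)).comap (QuotientGroup.mk' K)).map (QuotientGroup.mk' K) :=
          (Subgroup.map_comap_eq_self_of_surjective (QuotientGroup.mk'_surjective K) _).symm
      _ ≤ (frattini G).map (QuotientGroup.mk' K) := Subgroup.map_mono hcomap
  · exact Subgroup.map_le_iff_le_comap.mpr
      (frattini_le_comap_frattini_of_surjective (QuotientGroup.mk'_surjective K))


lemma centralizer_normal (B : Subgroup G) (hB : B.Normal) :
    (Subgroup.centralizer (B : Set G)).Normal := by
  constructor
  intro x hx g
  rw [Subgroup.mem_centralizer_iff]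
  intro h hh
  have hh' : g⁻¹ * h * g ∈ B := by
    have := hB.conj_mem h hh g⁻¹
    simpa using this
  have hc := Subgroup.mem_centralizer_iff.mp hx _ hh'
  -- hc : (g⁻¹ * h * g) * x = x * (g⁻¹ * h * g)
  have : h * (g * x * g⁻¹) = g * ((g⁻¹ * h * g) * x) * g⁻¹ := by group
  rw [this, hc]
  group

lemma le_centralizer_swap {H K : Subgroup G} (h : H ≤ Subgroup.centralizer (K : Set G)) :
    K ≤ Subgroup.centralizer (H : Set G) := by
  intro k hk
  rw [Subgroup.mem_centralizer_iff]
  intro x hx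
  exact (Subgroup.mem_centralizer_iff.mp (h hx) k hk).symm

lemma center_meet (X : Subgroup G) (hnil : Group.IsNilpotent ↥X) {A : Subgroup G}
    (hAn : A.Normal) (hAX : A ≤ X) (hA : A ≠ ⊥) :
    ∃ a : G, a ∈ A ∧ a ≠ 1 ∧ ∀ x ∈ X, a * x = x * a := by
  by_contra hcon
  push_neg at hcon
  obtain ⟨n, hn⟩ := hnil.nilpotent
  haveI hA'n : ((A.subgroupOf X)).Normal := hAn.subgroupOf X
  have key : ∀ i, A.subgroupOf X ⊓ Subgroup.upperCentralSeries ↥X i = ⊥ := by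
    intro i
    induction i with
    | zero => rw [Subgroup.upperCentralSeries_zero, inf_bot_eq]
    | succ i ih =>
      rw [eq_bot_iff]
      intro x hx
      have hxA : x ∈ A.subgroupOf X := hx.1
      have hcomm : ∀ y : ↥X, x * y * x⁻¹ * y⁻¹ = 1 := by
        intro y
        have h1 : x * y * x⁻¹ * y⁻¹ ∈ Subgroup.upperCentralSeries ↥X i :=
          Subgroup.mem_upperCentralSeries_succ_iff.mp hx.2 y
        have h2 : x * y * x⁻¹ * y⁻¹ ∈ A.subgroupOf X := by
          have hy : y * x⁻¹ * y⁻¹ ∈ A.subgroupOf X := by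
            have := hA'n.conj_mem x⁻¹ (Subgroup.inv_mem _ hxA) y
            simpa [mul_assoc] using this
          have := Subgroup.mul_mem _ hxA hy
          simpa [mul_assoc] using this
        have := ih.le (Subgroup.mem_inf.mpr ⟨h2, h1⟩)
        simpa using this
      have hxG : (x : G) ∈ A := Subgroup.mem_subgroupOf.mp hxA
      have hxcomm : ∀ z ∈ X, (x : G) * z = z * (x : G) := by
        intro z hz
        have := hcomm ⟨z, hz⟩
        have h2 : ((x * ⟨z, hz⟩ * x⁻¹ * (⟨z, hz⟩ : ↥X)⁻¹ : ↥X) : G) = 1 := by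
          rw [this]; rfl
        push_cast at h2
        have h3 : (x : G) * z * (x : G)⁻¹ * z⁻¹ = 1 := h2
        calc (x : G) * z = ((x : G) * z * (x : G)⁻¹ * z⁻¹) * (z * (x:G)) := by group
          _ = z * (x : G) := by rw [h3]; group
      by_cases hx1 : (x : G) = 1
      · simpa using Subtype.ext hx1
      · exact absurd hxcomm (by
          obtain ⟨z, hz, hnc⟩ := hcon x hxG hx1
          intro hall
          exact hnc (hall z hz))
  obtain ⟨a0, ha0⟩ := Subgroup.ne_bot_iff_exists_ne_one.mp hA
  have haX : (a0 : G) ∈ X := hAX a0.2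
  have : (⟨(a0 : G), haX⟩ : ↥X) ∈ A.subgroupOf X ⊓ Subgroup.upperCentralSeries ↥X n := by
    refine Subgroup.mem_inf.mpr ⟨Subgroup.mem_subgroupOf.mpr a0.2, ?_⟩
    rw [hn]; trivial
  rw [key n, Subgroup.mem_bot] at this
  apply ha0
  ext
  simpa using congrArg Subtype.val this

lemma exists_min_normal [Finite G] {S : Subgroup G} (hS : S.Normal) (hS0 : S ≠ ⊥) :
    ∃ B : Subgroup G, B.Normal ∧ B ≠ ⊥ ∧ B ≤ S ∧
      ∀ Y : Subgroup G, Y.Normal → Y ≤ B → Y ≠ ⊥ → Y = B := by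
  obtain ⟨B, hBs, hmin⟩ :=
    (wellFounded_lt (α := Subgroup G)).has_min {Y | Y.Normal ∧ Y ≠ ⊥ ∧ Y ≤ S}
      ⟨S, hS, hS0, le_rfl⟩
  refine ⟨B, hBs.1, hBs.2.1, hBs.2.2, fun Y hYn hYB hY0 => ?_⟩
  by_contra hne
  exact hmin Y ⟨hYn, hY0, hYB.trans hBs.2.2⟩ (lt_of_le_of_ne hYB hne)

lemma exists_min_sup [Finite G] (V : Subgroup G) :
    ∃ M : Subgroup G, V ⊔ M = ⊤ ∧ ∀ M', M' ≤ M → V ⊔ M' = ⊤ → M' = M := by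
  obtain ⟨M, hMs, hmin⟩ :=
    (wellFounded_lt (α := Subgroup G)).has_min {M | V ⊔ M = ⊤} ⟨⊤, by simp⟩
  refine ⟨M, hMs, fun M' hle htop => ?_⟩
  by_contra hne
  exact hmin M' htop (lt_of_le_of_ne hle hne)

lemma exists_coatom_not_le (hphi : frattini G = ⊥) {X : Subgroup G} (hX : X ≠ ⊥) :
    ∃ M : Subgroup G, IsCoatom M ∧ ¬ X ≤ M := by
  by_contra h
  push_neg at h
  apply hX
  rw [← le_bot_iff, ← hphi]
  rw [frattini, Order.radical]
  exact le_iInf₂ fun M hM => h M hM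

lemma mem_sup_decomp {A M : Subgroup G} [hA : A.Normal] {x : G} (hx : x ∈ A ⊔ M) :
    ∃ a ∈ A, ∃ m ∈ M, x = a * m := by
  have h : x ∈ ((A : Set G) * (M : Set G)) := by
    rw [← Subgroup.normal_mul]; exact hx
  obtain ⟨a, ha, m, hm, hx⟩ := Set.mem_mul.mp h
  exact ⟨a, ha, m, hm, hx.symm⟩

lemma min_normal_le_centralizer_fitting {B : Subgroup G} (hBn : B.Normal) (hB0 : B ≠ ⊥)
    (hmin : ∀ Y : Subgroup G, Y.Normal → Y ≤ B → Y ≠ ⊥ → Y = B) :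
    B ≤ Subgroup.centralizer ((fitting G : Subgroup G) : Set G) := by
  have key : ∀ X : Subgroup G, X.Normal → Group.IsNilpotent ↥X →
      B ≤ Subgroup.centralizer (X : Set G) := by
    intro X hXn hXnil
    haveI := hBn; haveI := hXn
    by_cases hBX : B ⊓ X = ⊥
    · apply Subgroup.commutator_eq_bot_iff_le_centralizer.mp
      rw [eq_bot_iff, ← hBX]
      exact le_inf (Subgroup.commutator_le_left _ _) (Subgroup.commutator_le_right _ _)
    · have hBle : B ≤ X := by
        have h1 := hmin (B ⊓ X) (Subgroup.normal_inf_normal B X) inf_le_left hBX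
        exact inf_eq_left.mp h1
      obtain ⟨a, haB, ha1, hacomm⟩ := center_meet X hXnil hBn hBle hB0
      have hYn : (B ⊓ Subgroup.centralizer (X : Set G)).Normal :=
        Subgroup.normal_inf_normal _ _ (hK := centralizer_normal X hXn)
      have hY0 : B ⊓ Subgroup.centralizer (X : Set G) ≠ ⊥ := by
        intro hbot
        apply ha1
        have haY : a ∈ B ⊓ Subgroup.centralizer (X : Set G) := by
          refine Subgroup.mem_inf.mpr ⟨haB, Subgroup.mem_centralizer_iff.mpr ?_⟩
          intro h hh
          exact (hacomm h hh).symm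
        rw [hbot, Subgroup.mem_bot] at haY
        exact haY
      have h2 := hmin _ hYn inf_le_left hY0
      rw [← h2]
      exact inf_le_right
  have hFC : fitting G ≤ Subgroup.centralizer (B : Set G) := by
    haveI : (Subgroup.centralizer (B : Set G)).Normal := centralizer_normal B hBn
    rw [fitting]
    apply Subgroup.normalClosure_le_normal
    rintro x ⟨X, hXn, hXnil, hxX⟩
    exact le_centralizer_swap (key X hXn hXnil) hxX
  exact le_centralizer_swap hFC


section QQ
variable (A P : Subgroup G) [A.Normal] [P.Normal] (hAP : A ≤ P)

lemma ker_le_comap' {H : Type*} [Group H] (f : G →* H) (N : Subgroup H) : f.ker ≤ N.comap f :=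
  fun x hx => by
    simp only [Subgroup.mem_comap, MonoidHom.mem_ker.mp hx, one_mem]

noncomputable def qq : (G ⧸ A) ⧸ (P.map (QuotientGroup.mk' A)) ≃* G ⧸ P :=
  haveI : (P.map (QuotientGroup.mk' A)).Normal :=
    Subgroup.Normal.map ‹P.Normal› _ (QuotientGroup.mk'_surjective A)
  QuotientGroup.quotientQuotientEquivQuotient A P hAP

lemma qq_comp_eq :
    haveI : (P.map (QuotientGroup.mk' A)).Normal :=
      Subgroup.Normal.map ‹P.Normal› _ (QuotientGroup.mk'_surjective A)
    ((qq A P hAP).toMonoidHom.comp (QuotientGroup.mk' (P.map (QuotientGroup.mk' A)))).comp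
      (QuotientGroup.mk' A) = QuotientGroup.mk' P := by
  haveI : (P.map (QuotientGroup.mk' A)).Normal :=
    Subgroup.Normal.map ‹P.Normal› _ (QuotientGroup.mk'_surjective A)
  ext x
  rfl

end QQ

lemma descend (A N : Subgroup G) [A.Normal] [N.Normal] (hAN : A ≤ N)
    (hA : frattini (G ⧸ A) = (frattini G).map (QuotientGroup.mk' A))
    (hIH : haveI : (N.map (QuotientGroup.mk' A)).Normal :=
        Subgroup.Normal.map ‹N.Normal› _ (QuotientGroup.mk'_surjective A)
      frattini ((G ⧸ A) ⧸ (N.map (QuotientGroup.mk' A))) =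
        (frattini (G ⧸ A)).map (QuotientGroup.mk' (N.map (QuotientGroup.mk' A)))) :
    frattini (G ⧸ N) = (frattini G).map (QuotientGroup.mk' N) := by
  haveI : (N.map (QuotientGroup.mk' A)).Normal :=
    Subgroup.Normal.map ‹N.Normal› _ (QuotientGroup.mk'_surjective A)
  rw [← frattini_map_mulEquiv (qq A N hAN), hIH, hA, Subgroup.map_map, Subgroup.map_map,
    qq_comp_eq A N hAN]

lemma classB_of_mulEquiv {H : Type*} [Group H] (e : G ≃* H) (h : classB G) : classB H := by
  intro N iN
  haveI : (N.comap e.toMonoidHom).Normal := iN.comap _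
  have hc : ((N.comap e.toMonoidHom).map e.toMonoidHom) = N :=
    Subgroup.map_comap_eq_self_of_surjective e.surjective _
  have e2 : (G ⧸ N.comap e.toMonoidHom) ≃* (H ⧸ N) := QuotientGroup.congr _ _ e hc
  exact frattini_eq_bot_of_mulEquiv e2 (h _)

lemma classB_quotient (h : classB G) (K : Subgroup G) [K.Normal] : classB (G ⧸ K) := by
  intro N iN
  haveI hM : (N.comap (QuotientGroup.mk' K)).Normal := iN.comap _
  have hKM : K ≤ N.comap (QuotientGroup.mk' K) := by
    intro x hx
    rw [Subgroup.mem_comap]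
    have hx1 : (QuotientGroup.mk' K) x = 1 := (QuotientGroup.eq_one_iff x).mpr hx
    rw [hx1]; exact one_mem _
  have hmap : (N.comap (QuotientGroup.mk' K)).map (QuotientGroup.mk' K) = N :=
    Subgroup.map_comap_eq_self_of_surjective (QuotientGroup.mk'_surjective K) _
  haveI : ((N.comap (QuotientGroup.mk' K)).map (QuotientGroup.mk' K)).Normal :=
    Subgroup.Normal.map hM _ (QuotientGroup.mk'_surjective K)
  have h2 := frattini_eq_bot_of_mulEquiv (qq K _ hKM).symm (h (N.comap (QuotientGroup.mk' K)))
  exact frattini_eq_bot_of_mulEquiv (QuotientGroup.quotientMulEquivOfEq hmap) h2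

lemma quotTriv {F : Subgroup G} [F.Normal] (hB : classB (G ⧸ F)) (P : Subgroup G) [P.Normal]
    (hFP : F ≤ P) : frattini (G ⧸ P) = ⊥ := by
  haveI : (P.map (QuotientGroup.mk' F)).Normal :=
    Subgroup.Normal.map ‹P.Normal› _ (QuotientGroup.mk'_surjective F)
  exact frattini_eq_bot_of_mulEquiv (qq F P hFP) (hB (P.map (QuotientGroup.mk' F)))

lemma le_fitting_of_nilpotent (X : Subgroup G) (hn : X.Normal) (hX : Group.IsNilpotent X) :
    X ≤ fitting G :=
  fun x hx => Subgroup.subset_normalClosure ⟨X, hn, hX, hx⟩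

lemma frattini_le_fitting [Finite G] : frattini G ≤ fitting G :=
  le_fitting_of_nilpotent _ inferInstance frattini_nilpotent

lemma map_fitting_le {H : Type*} [Group H] (f : G →* H) (hf : Function.Surjective f) :
    (fitting G).map f ≤ fitting H := by
  rw [fitting, Subgroup.map_normalClosure _ _ hf]
  apply Subgroup.normalClosure_le_normal
  rintro x ⟨y, ⟨X, hXn, hXnil, hyX⟩, rfl⟩
  haveI := hXnil
  exact Subgroup.subset_normalClosure
    ⟨X.map f, hXn.map f hf, nilpotent_of_surjective _ (f.subgroupMap_surjective X),
      Subgroup.mem_map_of_mem f hyX⟩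

lemma classB_fitting_quotient (hB : classB (G ⧸ fitting G)) (A : Subgroup G) [A.Normal] :
    classB ((G ⧸ A) ⧸ fitting (G ⧸ A)) := by
  set P := (fitting (G ⧸ A)).comap (QuotientGroup.mk' A) with hPdef
  haveI : P.Normal := (fitting_normal (G ⧸ A)).comap _
  have hFP : fitting G ≤ P :=
    Subgroup.map_le_iff_le_comap.mp (map_fitting_le _ (QuotientGroup.mk'_surjective A))
  have hAP : A ≤ P := by
    intro x hx
    rw [hPdef, Subgroup.mem_comap]
    have hx1 : (QuotientGroup.mk' A) x = 1 := (QuotientGroup.eq_one_iff x).mpr hx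
    rw [hx1]; exact one_mem _
  have h1 : classB (G ⧸ P) := by
    haveI : (P.map (QuotientGroup.mk' (fitting G))).Normal :=
      Subgroup.Normal.map ‹P.Normal› _ (QuotientGroup.mk'_surjective _)
    exact classB_of_mulEquiv (qq (fitting G) P hFP)
      (classB_quotient hB (P.map (QuotientGroup.mk' (fitting G))))
  have hmap : P.map (QuotientGroup.mk' A) = fitting (G ⧸ A) :=
    Subgroup.map_comap_eq_self_of_surjective (QuotientGroup.mk'_surjective _) _
  haveI : (P.map (QuotientGroup.mk' A)).Normal :=
    Subgroup.Normal.map ‹P.Normal› _ (QuotientGroup.mk'_surjective A)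
  have h2 := classB_of_mulEquiv (qq A P hAP).symm h1
  exact classB_of_mulEquiv (QuotientGroup.quotientMulEquivOfEq hmap) h2


/-- Conjugation-stability pattern: `P ⊓ S` is normal provided `G = Q ⊔ M`,
elements of `Q` commute with elements of `P ⊓ S`, and `M` conjugates `P ⊓ S` into `S`. -/
lemma normal_inf_of {P S Q M : Subgroup G} (hPn : P.Normal) [Q.Normal] (htop : Q ⊔ M = ⊤)
    (hQcomm : ∀ q ∈ Q, ∀ x ∈ P ⊓ S, q * x = x * q)
    (hMS : ∀ m ∈ M, ∀ x ∈ P ⊓ S, m * x * m⁻¹ ∈ S) : (P ⊓ S).Normal := by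
  constructor
  intro x hx g
  obtain ⟨q, hq, m, hm, rfl⟩ := mem_sup_decomp (htop ▸ Subgroup.mem_top g)
  have h1 : m * x * m⁻¹ ∈ P ⊓ S :=
    Subgroup.mem_inf.mpr ⟨hPn.conj_mem _ (Subgroup.mem_inf.mp hx).1 m, hMS m hm x hx⟩
  have h2 : q * (m * x * m⁻¹) * q⁻¹ = m * x * m⁻¹ := by
    rw [hQcomm q hq _ h1, mul_inv_cancel_right]
  have h3 : (q * m) * x * (q * m)⁻¹ = q * (m * x * m⁻¹) * q⁻¹ := by group
  rw [h3, h2]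
  exact h1

/-- If `M` is minimal with `V ⊔ M = ⊤`, `V` normal "commutative", and `Φ(G)=⊥`,
then `V ⊓ M = ⊥`. -/
lemma min_sup_inf_bot (hphi : frattini G = ⊥) {V M : Subgroup G} [V.Normal]
    (hVM : (V ⊓ M).Normal) (htop : V ⊔ M = ⊤)
    (hminM : ∀ M', M' ≤ M → V ⊔ M' = ⊤ → M' = M) : V ⊓ M = ⊥ := by
  rw [← le_bot_iff, ← hphi]
  apply le_frattini
  intro U hU
  by_contra hXU
  have htopXU : (V ⊓ M) ⊔ U = ⊤ := by
    refine hU.2 _ (lt_of_le_of_ne le_sup_right fun h => hXU ?_)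
    rw [h]; exact le_sup_left
  have hdec : M ≤ (V ⊓ M) ⊔ (M ⊓ U) := by
    intro m hm
    haveI := hVM
    obtain ⟨x, hxX, u, hu, rfl⟩ := mem_sup_decomp (htopXU ▸ Subgroup.mem_top m)
    have huM : u ∈ M := by
      have := Subgroup.mul_mem M (Subgroup.inv_mem M (Subgroup.mem_inf.mp hxX).2) hm
      simpa [mul_assoc] using this
    exact Subgroup.mul_mem _ (Subgroup.mem_sup_left hxX)
      (Subgroup.mem_sup_right (Subgroup.mem_inf.mpr ⟨huM, hu⟩))
  have htop2 : V ⊔ (M ⊓ U) = ⊤ := by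
    have h3 : (⊤ : Subgroup G) ≤ V ⊔ (M ⊓ U) := by
      rw [← htop]
      exact sup_le le_sup_left
        (hdec.trans (sup_le (inf_le_left.trans le_sup_left) le_sup_right))
    exact le_antisymm le_top h3
  have h4 := hminM (M ⊓ U) inf_le_left htop2
  apply hXU
  refine inf_le_right.trans ?_
  rw [← h4]
  exact inf_le_right

/-- The crucial lemma: if `Φ(G) = ⊥` and `G/F(G) ∈ 𝔅`, then `Φ(G/A) = ⊥`
for `A` a minimal normal subgroup. -/
lemma crux [Finite G] (hphi : frattini G = ⊥) (hB : classB (G ⧸ fitting G))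
    {A : Subgroup G} (hAn : A.Normal) (hA0 : A ≠ ⊥)
    (hAmin : ∀ Y : Subgroup G, Y.Normal → Y ≤ A → Y ≠ ⊥ → Y = A) :
    frattini (G ⧸ A) = ⊥ := by
  haveI := hAn
  by_contra hfr
  set F := fitting G with hF
  set T := (frattini (G ⧸ A)).comap (QuotientGroup.mk' A) with hT
  haveI hTn : T.Normal := Subgroup.Normal.comap inferInstance _
  have hAT : A ≤ T := by
    intro x hx
    rw [hT, Subgroup.mem_comap]
    have h1 : (QuotientGroup.mk' A) x = 1 := (QuotientGroup.eq_one_iff x).mpr hx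
    rw [h1]; exact one_mem _
  have hTA : ¬ T ≤ A := by
    intro hle
    apply hfr
    have h1 := Subgroup.map_mono (f := QuotientGroup.mk' A) hle
    have h2 : T.map (QuotientGroup.mk' A) = frattini (G ⧸ A) :=
      Subgroup.map_comap_eq_self_of_surjective (QuotientGroup.mk'_surjective A) _
    have h3 : A.map (QuotientGroup.mk' A) = ⊥ := by
      rw [Subgroup.map_eq_bot_iff, QuotientGroup.ker_mk']
    rw [h2, h3, le_bot_iff] at h1
    exact h1
  have hT0 : T ≠ ⊥ := fun h => hA0 (le_bot_iff.mp (h ▸ hAT))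
  have hTcoatom : ∀ M : Subgroup G, IsCoatom M → A ≤ M → T ≤ M := by
    intro M hM hAM
    have hco : IsCoatom (M.map (QuotientGroup.mk' A)) :=
      isCoatom_map_of_surjective (QuotientGroup.mk'_surjective A) hM
        (by rwa [QuotientGroup.ker_mk'])
    calc T ≤ ((M.map (QuotientGroup.mk' A)).comap (QuotientGroup.mk' A)) :=
          Subgroup.comap_mono (frattini_le_coatom hco)
      _ = M ⊔ A := by rw [Subgroup.comap_map_eq, QuotientGroup.ker_mk']
      _ = M := sup_of_le_left hAM
  have hTAF : T ≤ A ⊔ F := by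
    haveI : (A ⊔ F).Normal := Subgroup.sup_normal A F
    have hbot : frattini (G ⧸ (A ⊔ F)) = ⊥ := quotTriv hB (A ⊔ F) le_sup_right
    set π : (G ⧸ A) →* (G ⧸ (A ⊔ F)) :=
      QuotientGroup.map A (A ⊔ F) (MonoidHom.id G) le_sup_left with hπ
    have hπs : Function.Surjective π := by
      intro y
      obtain ⟨x, rfl⟩ := QuotientGroup.mk'_surjective (A ⊔ F) y
      exact ⟨QuotientGroup.mk' A x, rfl⟩
    have h1 : frattini (G ⧸ A) ≤ π.ker := by
      have h2 := frattini_le_comap_frattini_of_surjective hπs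
      rwa [hbot, MonoidHom.comap_bot] at h2
    have h2 : π.comp (QuotientGroup.mk' A) = QuotientGroup.mk' (A ⊔ F) := by
      ext x; rfl
    calc T ≤ π.ker.comap (QuotientGroup.mk' A) := Subgroup.comap_mono h1
      _ = (π.comp (QuotientGroup.mk' A)).ker := by rw [MonoidHom.comap_ker]
      _ = A ⊔ F := by rw [h2, QuotientGroup.ker_mk']
  -- the center of the Fitting subgroup
  set Z := Subgroup.centralizer (F : Set G) ⊓ F with hZ
  haveI hZc : (Subgroup.centralizer (F : Set G)).Normal := centralizer_normal F inferInstance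
  haveI hZn : Z.Normal := Subgroup.normal_inf_normal _ _
  have hZcomm : ∀ z ∈ Z, ∀ w ∈ Z, z * w = w * z := by
    intro z hz w hw
    exact ((Subgroup.mem_centralizer_iff.mp (Subgroup.mem_inf.mp hz).1) w
      (Subgroup.mem_inf.mp hw).2).symm
  have hAcent : A ≤ Subgroup.centralizer (F : Set G) :=
    min_normal_le_centralizer_fitting hAn hA0 hAmin
  -- dichotomy on the commutator of A
  by_cases hab : ⁅A, A⁆ = ⊥
  · -- ===================== abelian case =====================
    have hAcomm : ∀ x ∈ A, ∀ y ∈ A, x * y = y * x := by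
      have h1 := Subgroup.commutator_eq_bot_iff_le_centralizer.mp hab
      exact fun x hx y hy => ((Subgroup.mem_centralizer_iff.mp (h1 hx)) y hy).symm
    have hAF : A ≤ F := by
      haveI hic : IsMulCommutative A :=
        Subgroup.le_centralizer_iff_isMulCommutative.mp
          (Subgroup.commutator_eq_bot_iff_le_centralizer.mp hab)
      exact fun x hx => Subgroup.subset_normalClosure ⟨A, hAn, (by open scoped IsMulCommutative in infer_instance), hx⟩
    have hAZ : A ≤ Z := le_inf hAcent hAF
    have hTF : T ≤ F := by
      have := hTAF
      rwa [sup_of_le_right hAF] at this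
    have hACT : ∀ x ∈ A, ∀ t ∈ T, x * t = t * x := fun x hx t ht =>
      ((Subgroup.mem_centralizer_iff.mp (hAcent hx)) t (hTF ht)).symm
    obtain ⟨M₀, hM₀, hTM₀⟩ := exists_coatom_not_le hphi hT0
    have hAM₀ : ¬ A ≤ M₀ := fun h => hTM₀ (hTcoatom M₀ hM₀ h)
    have htop₀ : A ⊔ M₀ = ⊤ := by
      refine hM₀.2 _ (lt_of_le_of_ne le_sup_right fun h => hAM₀ ?_)
      rw [h]; exact le_sup_left
    have hDn : (T ⊓ M₀).Normal :=
      normal_inf_of hTn htop₀ (fun q hq x hx => hACT q hq x (Subgroup.mem_inf.mp hx).1)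
        (fun m hm x hx => Subgroup.mul_mem _ (Subgroup.mul_mem _ hm
          (Subgroup.mem_inf.mp hx).2) (Subgroup.inv_mem _ hm))
    have hTAD : T = A ⊔ (T ⊓ M₀) := by
      apply le_antisymm
      · intro x hx
        obtain ⟨a, ha, m, hm, rfl⟩ := mem_sup_decomp (htop₀ ▸ Subgroup.mem_top x)
        have hmT : m ∈ T := by
          have := Subgroup.mul_mem T (Subgroup.inv_mem T (hAT ha)) hx
          simpa [mul_assoc] using this
        exact Subgroup.mul_mem _ (Subgroup.mem_sup_left ha)
          (Subgroup.mem_sup_right (Subgroup.mem_inf.mpr ⟨hmT, hm⟩))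
      · exact sup_le hAT inf_le_left
    have hD0 : T ⊓ M₀ ≠ ⊥ := by
      intro h
      apply hTA
      rw [hTAD, h, sup_bot_eq]
    obtain ⟨B, hBn, hB0, hBD, hBmin⟩ := exists_min_normal hDn hD0
    have hBZ : B ≤ Z :=
      le_inf (min_normal_le_centralizer_fitting hBn hB0 hBmin)
        (hBD.trans (inf_le_left.trans hTF))
    have hBT : B ≤ T := hBD.trans inf_le_left
    have hBcomm : ∀ x ∈ B, ∀ y ∈ B, x * y = y * x :=
      fun x hx y hy => hZcomm x (hBZ hx) y (hBZ hy)
    have hAM₀bot : A ⊓ M₀ = ⊥ := by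
      by_contra hne
      have hNorm : (A ⊓ M₀).Normal :=
        normal_inf_of hAn htop₀ (fun q hq x hx => hAcomm q hq x (Subgroup.mem_inf.mp hx).1)
          (fun m hm x hx => Subgroup.mul_mem _ (Subgroup.mul_mem _ hm
            (Subgroup.mem_inf.mp hx).2) (Subgroup.inv_mem _ hm))
      exact hAM₀ (inf_eq_left.mp (hAmin _ hNorm inf_le_left hne))
    have hABbot : A ⊓ B = ⊥ := by
      rw [← le_bot_iff, ← hAM₀bot]
      exact le_inf inf_le_left (inf_le_right.trans (hBD.trans inf_le_right))
    have hABcomm : ∀ x ∈ A, ∀ y ∈ B, x * y = y * x := by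
      have h1 : ⁅A, B⁆ = ⊥ := by
        rw [← le_bot_iff, ← hABbot]
        exact le_inf (Subgroup.commutator_le_left _ _) (Subgroup.commutator_le_right _ _)
      have h2 := Subgroup.commutator_eq_bot_iff_le_centralizer.mp h1
      exact fun x hx y hy => ((Subgroup.mem_centralizer_iff.mp (le_centralizer_swap h2 hy)) x hx)
    set V := A ⊔ B with hV
    haveI hVn : V.Normal := Subgroup.sup_normal A B
    have hVZ : V ≤ Z := sup_le hAZ hBZ
    have hVcomm : ∀ x ∈ V, ∀ y ∈ V, x * y = y * x :=
      fun x hx y hy => hZcomm x (hVZ hx) y (hVZ hy)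
    obtain ⟨MW, hMWtop, hMWmin⟩ := exists_min_sup V
    have hXn : (V ⊓ MW).Normal :=
      normal_inf_of hVn hMWtop (fun q hq x hx => hVcomm q hq x (Subgroup.mem_inf.mp hx).1)
        (fun m hm x hx => Subgroup.mul_mem _ (Subgroup.mul_mem _ hm
          (Subgroup.mem_inf.mp hx).2) (Subgroup.inv_mem _ hm))
    have hXbot : V ⊓ MW = ⊥ := min_sup_inf_bot hphi hXn hMWtop hMWmin
    have hZMWtop : Z ⊔ MW = ⊤ := by
      rw [← top_le_iff, ← hMWtop]
      exact sup_le (hVZ.trans le_sup_left) le_sup_right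
    set W := Z ⊓ MW with hW
    have hWn : W.Normal :=
      normal_inf_of hZn hZMWtop (fun q hq x hx => hZcomm q hq x (Subgroup.mem_inf.mp hx).1)
        (fun m hm x hx => Subgroup.mul_mem _ (Subgroup.mul_mem _ hm
          (Subgroup.mem_inf.mp hx).2) (Subgroup.inv_mem _ hm))
    have hZVW : Z = V ⊔ W := by
      apply le_antisymm
      · intro z hz
        obtain ⟨v, hv, m, hm, rfl⟩ := mem_sup_decomp (hMWtop ▸ Subgroup.mem_top z)
        have hmZ : m ∈ Z := by
          have := Subgroup.mul_mem Z (Subgroup.inv_mem Z (hVZ hv)) hz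
          simpa [mul_assoc] using this
        exact Subgroup.mul_mem _ (Subgroup.mem_sup_left hv)
          (Subgroup.mem_sup_right (Subgroup.mem_inf.mpr ⟨hmZ, hm⟩))
      · exact sup_le hVZ inf_le_left
    have hVWbot : V ⊓ W ≤ ⊥ := by
      rw [← hXbot]
      exact le_inf inf_le_left (inf_le_right.trans inf_le_right)
    set U' := A ⊔ W with hU'
    haveI hU'n : U'.Normal := Subgroup.sup_normal A W
    have hU'Z : U' ≤ Z := sup_le hAZ inf_le_left
    have hBU' : B ⊓ U' = ⊥ := by
      rw [eq_bot_iff]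
      intro x hx
      obtain ⟨hxB, hxU⟩ := Subgroup.mem_inf.mp hx
      obtain ⟨a, ha, w, hw, rfl⟩ := mem_sup_decomp hxU
      have hwV : w ∈ V := by
        have := Subgroup.mul_mem V (Subgroup.inv_mem V (Subgroup.mem_sup_left ha))
          (Subgroup.mem_sup_right hxB)
        simpa [mul_assoc] using this
      have hw1 : w = 1 := by
        have := hVWbot (Subgroup.mem_inf.mpr ⟨hwV, hw⟩)
        simpa using this
      rw [hw1, mul_one] at hxB ⊢
      have : a ∈ A ⊓ B := Subgroup.mem_inf.mpr ⟨ha, hxB⟩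
      rw [hABbot] at this
      exact this
    obtain ⟨L, hLtop, hLmin⟩ := exists_min_sup Z
    have hX'n : (Z ⊓ L).Normal :=
      normal_inf_of hZn hLtop (fun q hq x hx => hZcomm q hq x (Subgroup.mem_inf.mp hx).1)
        (fun m hm x hx => Subgroup.mul_mem _ (Subgroup.mul_mem _ hm
          (Subgroup.mem_inf.mp hx).2) (Subgroup.inv_mem _ hm))
    have hX'bot : Z ⊓ L = ⊥ := min_sup_inf_bot hphi hX'n hLtop hLmin
    set Mstar := U' ⊔ L with hMstar
    have hZMstar : Z ⊓ Mstar ≤ U' := by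
      intro x hx
      obtain ⟨hxZ, hxM⟩ := Subgroup.mem_inf.mp hx
      obtain ⟨u, hu, l, hl, rfl⟩ := mem_sup_decomp hxM
      have hlZ : l ∈ Z := by
        have := Subgroup.mul_mem Z (Subgroup.inv_mem Z (hU'Z hu)) hxZ
        simpa [mul_assoc] using this
      have hl1 : l = 1 := by
        have : l ∈ Z ⊓ L := Subgroup.mem_inf.mpr ⟨hlZ, hl⟩
        rw [hX'bot] at this
        simpa using this
      rw [hl1, mul_one]
      exact hu
    have hBMstar : B ⊓ Mstar = ⊥ := by
      rw [eq_bot_iff]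
      intro x hx
      obtain ⟨hxB, hxM⟩ := Subgroup.mem_inf.mp hx
      have hxU : x ∈ U' := hZMstar (Subgroup.mem_inf.mpr ⟨hBZ hxB, hxM⟩)
      have : x ∈ B ⊓ U' := Subgroup.mem_inf.mpr ⟨hxB, hxU⟩
      rw [hBU'] at this
      exact this
    have htopstar : B ⊔ Mstar = ⊤ := by
      have h1 : B ⊔ U' = Z := by
        rw [hU', ← sup_assoc, sup_comm B A, ← hV, ← hZVW]
      rw [hMstar, ← sup_assoc, h1, hLtop]
    have hMstarne : Mstar ≠ ⊤ := by
      intro h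
      apply hB0
      rw [← le_bot_iff, ← hBMstar, h, inf_top_eq]
    have hcoatom : IsCoatom Mstar := by
      refine ⟨hMstarne, fun H hH => ?_⟩
      obtain ⟨h, hhH, hhM⟩ := SetLike.exists_of_lt hH
      haveI hBH : (B ⊓ H).Normal :=
        normal_inf_of hBn htopstar (fun q hq x hx => hBcomm q hq x (Subgroup.mem_inf.mp hx).1)
          (fun m hm x hx => Subgroup.mul_mem _ (Subgroup.mul_mem _ (hH.le hm)
            (Subgroup.mem_inf.mp hx).2) (Subgroup.inv_mem _ (hH.le hm)))
      have hBH0 : B ⊓ H ≠ ⊥ := by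
        obtain ⟨b, hb, m, hm, rfl⟩ := mem_sup_decomp (htopstar ▸ Subgroup.mem_top h)
        intro hbot
        have hbH : b ∈ H := by
          have := Subgroup.mul_mem H hhH (Subgroup.inv_mem H (hH.le hm))
          simpa [mul_assoc] using this
        have : b ∈ B ⊓ H := Subgroup.mem_inf.mpr ⟨hb, hbH⟩
        rw [hbot] at this
        rw [Subgroup.mem_bot.mp this, one_mul] at hhM
        exact hhM hm
      have hBH' := hBmin (B ⊓ H) hBH inf_le_left hBH0
      have hBleH : B ≤ H := inf_eq_left.mp hBH'
      rw [← top_le_iff, ← htopstar]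
      exact sup_le hBleH hH.le
    have hAMstar : A ≤ Mstar := le_sup_left.trans le_sup_left
    have hTMstar : T ≤ Mstar := hTcoatom _ hcoatom hAMstar
    apply hB0
    rw [← le_bot_iff, ← hBMstar]
    exact le_inf le_rfl (hBT.trans hTMstar)
  · -- ===================== nonabelian case =====================
    have hab' : ⁅A, A⁆ = A :=
      hAmin _ inferInstance (Subgroup.commutator_le_left A A) hab
    have hAFbot : A ⊓ F = ⊥ := by
      by_contra hne
      have h1 : (A ⊓ F).Normal := Subgroup.normal_inf_normal A F
      have hAF : A ≤ F := inf_eq_left.mp (hAmin _ h1 inf_le_left hne)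
      apply hab
      rw [← le_bot_iff]
      rw [Subgroup.commutator_le]
      intro x hx y hy
      have : x * y = y * x := ((Subgroup.mem_centralizer_iff.mp (hAcent hx)) y (hAF hy)).symm
      rw [Subgroup.mem_bot]
      exact commutatorElement_eq_one_iff_commute.mpr this
    set S := T ⊓ F with hS
    haveI hSn : S.Normal := Subgroup.normal_inf_normal T F
    have hTAS : T = A ⊔ S := by
      apply le_antisymm
      · intro x hx
        obtain ⟨a, ha, f, hf, rfl⟩ := mem_sup_decomp (hTAF hx)
        have hfT : f ∈ T := by
          have := Subgroup.mul_mem T (Subgroup.inv_mem T (hAT ha)) hx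
          simpa [mul_assoc] using this
        exact Subgroup.mul_mem _ (Subgroup.mem_sup_left ha)
          (Subgroup.mem_sup_right (Subgroup.mem_inf.mpr ⟨hfT, hf⟩))
      · exact sup_le hAT inf_le_left
    have hS0 : S ≠ ⊥ := by
      intro h
      apply hTA
      rw [hTAS, h, sup_bot_eq]
    obtain ⟨B, hBn, hB0, hBS, hBmin⟩ := exists_min_normal hSn hS0
    have hBF : B ≤ F := hBS.trans inf_le_right
    have hBT : B ≤ T := hBS.trans inf_le_left
    have hBcF : B ≤ Subgroup.centralizer (F : Set G) :=
      min_normal_le_centralizer_fitting hBn hB0 hBmin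
    have hBcomm : ∀ x ∈ B, ∀ y ∈ B, x * y = y * x :=
      fun x hx y hy => ((Subgroup.mem_centralizer_iff.mp (hBcF hx)) y (hBF hy)).symm
    have hABbot : A ⊓ B = ⊥ := by
      rw [← le_bot_iff, ← hAFbot]
      exact le_inf inf_le_left (inf_le_right.trans hBF)
    have hABcomm : ⁅A, B⁆ = ⊥ := by
      rw [← le_bot_iff, ← hABbot]
      exact le_inf (Subgroup.commutator_le_left _ _) (Subgroup.commutator_le_right _ _)
    obtain ⟨M₁, hM₁, hBM₁⟩ := exists_coatom_not_le hphi hB0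
    have htop₁ : B ⊔ M₁ = ⊤ := by
      refine hM₁.2 _ (lt_of_le_of_ne le_sup_right fun h => hBM₁ ?_)
      rw [h]; exact le_sup_left
    set C := Subgroup.centralizer (B : Set G) with hC
    haveI hCn : C.Normal := centralizer_normal B hBn
    have hAC : A ≤ C := Subgroup.commutator_eq_bot_iff_le_centralizer.mp hABcomm
    have hBC : B ≤ C := by
      intro b hb
      rw [Subgroup.mem_centralizer_iff]
      exact fun y hy => hBcomm y hy b hb
    have hRn : (C ⊓ M₁).Normal :=
      normal_inf_of hCn htop₁
        (fun q hq x hx =>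
          (Subgroup.mem_centralizer_iff.mp (Subgroup.mem_inf.mp hx).1) q hq)
        (fun m hm x hx => Subgroup.mul_mem _ (Subgroup.mul_mem _ hm
          (Subgroup.mem_inf.mp hx).2) (Subgroup.inv_mem _ hm))
    haveI := hRn
    have hAR : A ≤ C ⊓ M₁ := by
      have hsuff : ⁅A, A⁆ ≤ C ⊓ M₁ := by
        rw [Subgroup.commutator_le]
        intro x hx y hy
        obtain ⟨b, hb, m, hm, hxe⟩ := mem_sup_decomp (htop₁ ▸ Subgroup.mem_top x)
        have hmR : m ∈ C ⊓ M₁ := by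
          refine Subgroup.mem_inf.mpr ⟨?_, hm⟩
          have : m = b⁻¹ * x := by rw [hxe, ← mul_assoc, inv_mul_cancel, one_mul]
          rw [this]
          exact Subgroup.mul_mem C (Subgroup.inv_mem C (hBC hb)) (hAC hx)
        obtain ⟨b', hb', m', hm', hye⟩ := mem_sup_decomp (htop₁ ▸ Subgroup.mem_top y)
        have hmR' : m' ∈ C ⊓ M₁ := by
          refine Subgroup.mem_inf.mpr ⟨?_, hm'⟩
          have : m' = b'⁻¹ * y := by rw [hye, ← mul_assoc, inv_mul_cancel, one_mul]
          rw [this]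
          exact Subgroup.mul_mem C (Subgroup.inv_mem C (hBC hb')) (hAC hy)
        have hker : (QuotientGroup.mk' (C ⊓ M₁)) ⁅x, y⁆ = 1 := by
          rw [map_commutatorElement]
          have hm1 : (QuotientGroup.mk' (C ⊓ M₁)) m = 1 := (QuotientGroup.eq_one_iff m).mpr hmR
          have hm1' : (QuotientGroup.mk' (C ⊓ M₁)) m' = 1 := (QuotientGroup.eq_one_iff m').mpr hmR'
          have e1 : (QuotientGroup.mk' (C ⊓ M₁)) x = (QuotientGroup.mk' (C ⊓ M₁)) b := by
            rw [hxe, map_mul, hm1, mul_one]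
          have e2 : (QuotientGroup.mk' (C ⊓ M₁)) y = (QuotientGroup.mk' (C ⊓ M₁)) b' := by
            rw [hye, map_mul, hm1', mul_one]
          rw [e1, e2]
          apply commutatorElement_eq_one_iff_commute.mpr
          have := hBcomm b hb b' hb'
          unfold Commute SemiconjBy
          rw [← map_mul, ← map_mul, this]
        have := (QuotientGroup.eq_one_iff _).mp hker
        exact this
      rwa [hab'] at hsuff
    have hAM₁ : A ≤ M₁ := hAR.trans inf_le_right
    exact hBM₁ (hBT.trans (hTcoatom M₁ hM₁ hAM₁))


lemma card_quotient_lt [Finite G] {K : Subgroup G} [K.Normal] (hK : K ≠ ⊥) :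
    Nat.card (G ⧸ K) < Nat.card G := by
  have h1 : Nat.card G = Nat.card (G ⧸ K) * Nat.card K :=
    Subgroup.card_eq_card_quotient_mul_card_subgroup K
  have h2 : 1 < Nat.card K := (Subgroup.one_lt_card_iff_ne_bot K).mpr hK
  have h3 : 0 < Nat.card (G ⧸ K) := Nat.card_pos
  calc Nat.card (G ⧸ K) = Nat.card (G ⧸ K) * 1 := (mul_one _).symm
    _ < Nat.card (G ⧸ K) * Nat.card K := by exact mul_lt_mul_of_pos_left h2 h3
    _ = Nat.card G := h1.symm

universe u

lemma main (n : ℕ) : ∀ (G : Type u) [Group G] [Finite G], Nat.card G = n →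
    classB (G ⧸ fitting G) →
    ∀ (N : Subgroup G) [N.Normal],
      frattini (G ⧸ N) = (frattini G).map (QuotientGroup.mk' N) := by
  induction n using Nat.strong_induction_on with
  | _ n IH =>
    intro G _ _ hcard hB N hN
    by_cases hNle : N ≤ frattini G
    · exact frattini_quotient_of_le_frattini N hNle
    by_cases hphi : frattini G = ⊥
    · have hN0 : N ≠ ⊥ := fun h => hNle (h ▸ bot_le)
      obtain ⟨A, hAn, hA0, hAN, hAmin⟩ := exists_min_normal ‹N.Normal› hN0
      haveI := hAn
      have hA : frattini (G ⧸ A) = (frattini G).map (QuotientGroup.mk' A) := by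
        rw [crux hphi hB hAn hA0 hAmin, hphi, Subgroup.map_bot]
      haveI : (N.map (QuotientGroup.mk' A)).Normal :=
        Subgroup.Normal.map ‹N.Normal› _ (QuotientGroup.mk'_surjective A)
      have hIH := IH (Nat.card (G ⧸ A)) (hcard ▸ card_quotient_lt hA0) (G ⧸ A) rfl
        (classB_fitting_quotient hB A) (N.map (QuotientGroup.mk' A))
      exact descend A N hAN hA hIH
    · set P := N ⊔ frattini G with hP
      haveI hPn : P.Normal := Subgroup.sup_normal N (frattini G)
      have hq1 : frattini (G ⧸ frattini G) = ⊥ := by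
        have h := frattini_quotient_of_le_frattini (frattini G) le_rfl
        rw [h, Subgroup.map_eq_bot_iff, QuotientGroup.ker_mk']
      haveI : (P.map (QuotientGroup.mk' (frattini G))).Normal :=
        Subgroup.Normal.map hPn _ (QuotientGroup.mk'_surjective _)
      have hIH := IH (Nat.card (G ⧸ frattini G)) (hcard ▸ card_quotient_lt hphi)
        (G ⧸ frattini G) rfl (classB_fitting_quotient hB (frattini G))
        (P.map (QuotientGroup.mk' (frattini G)))
      have h2 : frattini ((G ⧸ frattini G) ⧸ (P.map (QuotientGroup.mk' (frattini G)))) = ⊥ := by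
        rw [hIH, hq1, Subgroup.map_bot]
      have h3 : frattini (G ⧸ P) = ⊥ :=
        frattini_eq_bot_of_mulEquiv (qq (frattini G) P le_sup_right) h2
      set K' := (frattini G).map (QuotientGroup.mk' N) with hK'
      haveI hK'n : K'.Normal :=
        Subgroup.Normal.map inferInstance _ (QuotientGroup.mk'_surjective N)
      have hK'le : K' ≤ frattini (G ⧸ N) :=
        Subgroup.map_le_iff_le_comap.mpr
          (frattini_le_comap_frattini_of_surjective (QuotientGroup.mk'_surjective N))
      have hPK' : P.map (QuotientGroup.mk' N) = K' := by
        rw [hP, Subgroup.map_sup]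
        have h0 : N.map (QuotientGroup.mk' N) = ⊥ := by
          rw [Subgroup.map_eq_bot_iff, QuotientGroup.ker_mk']
        rw [h0, bot_sup_eq]
      haveI : (P.map (QuotientGroup.mk' N)).Normal :=
        Subgroup.Normal.map hPn _ (QuotientGroup.mk'_surjective N)
      have h4 : frattini ((G ⧸ N) ⧸ K') = ⊥ := by
        have h5 := frattini_eq_bot_of_mulEquiv (qq N P le_sup_left).symm h3
        exact frattini_eq_bot_of_mulEquiv (QuotientGroup.quotientMulEquivOfEq hPK') h5
      have h5 := frattini_quotient_of_le_frattini K' hK'le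
      rw [h4] at h5
      have h6 : frattini (G ⧸ N) ≤ K' := by
        have h7 := h5.symm
        rw [Subgroup.map_eq_bot_iff, QuotientGroup.ker_mk'] at h7
        exact h7
      exact le_antisymm h6 hK'le

end Aux

open Aux in
/-- `Φ(G/N) = Φ(G)N/N` for all `N ⊴ G` iff `G/F(G)` has no Frattini chief factors. -/
theorem stmt_18 (G : Type*) [Group G] [Finite G] :
    (∀ (N : Subgroup G) [N.Normal],
        frattini (G ⧸ N) = (frattini G).map (QuotientGroup.mk' N)) ↔
      classB (G ⧸ fitting G) := by
  constructor
  · intro h N iN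
    set P := N.comap (QuotientGroup.mk' (fitting G)) with hPdef
    haveI : P.Normal := iN.comap _
    have hFP : fitting G ≤ P := by
      intro x hx
      rw [hPdef, Subgroup.mem_comap]
      have h1 : (QuotientGroup.mk' (fitting G)) x = 1 := (QuotientGroup.eq_one_iff x).mpr hx
      rw [h1]; exact one_mem _
    have h1 := h P
    have h2 : (frattini G).map (QuotientGroup.mk' P) = ⊥ := by
      rw [Subgroup.map_eq_bot_iff, QuotientGroup.ker_mk']
      exact frattini_le_fitting.trans hFP
    rw [h2] at h1
    haveI : (P.map (QuotientGroup.mk' (fitting G))).Normal :=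
      Subgroup.Normal.map ‹P.Normal› _ (QuotientGroup.mk'_surjective _)
    have hmap : P.map (QuotientGroup.mk' (fitting G)) = N :=
      Subgroup.map_comap_eq_self_of_surjective (QuotientGroup.mk'_surjective _) _
    have h3 := frattini_eq_bot_of_mulEquiv (qq (fitting G) P hFP).symm h1
    exact frattini_eq_bot_of_mulEquiv (QuotientGroup.quotientMulEquivOfEq hmap) h3
  · intro hB N iN
    exact main (Nat.card G) G rfl hB N
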